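/- Let n ≥ 1 and let α = (α_1, …, α_n) ∈ ℝ^n be non-singular, i.e. limsup_{t→∞} t^{1/n} · ψ_α(t) > 0, where ψ_α(t) = min_{q∈ℤ, 1≤q≤t} max_{1≤j≤n} ‖qα_j‖. Then there exist δ > 0 and infinitely many positive integers q such that for every η = (η_1, …, η_n) ∈ ℝ^n there exists a positive integer k ≤ q with max_{1≤j≤n} ‖kα_j − η_j‖ ≤ δ/q^{1/n}. In particular, the Kronecker sequence ξ_k = ({kα_1}, …, {kα_n}) is well distributed with constant C = 2δ. -/

import Mathlib

set_option maxHeartbeats 1000000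


open MeasureTheory Filter

/-- Distance from `x` to the nearest integer: `‖x‖ = min_{a ∈ ℤ} |x - a|`. -/
noncomputable def nint (x : ℝ) : ℝ := ⨅ a : ℤ, |x - (a : ℝ)|

/-- The irrationality measure function
`ψ_α(t) = min_{q ∈ ℤ, 1 ≤ q ≤ t} max_{1 ≤ j ≤ n} ‖q α_j‖`. -/
noncomputable def psiFun (n : ℕ) (α : Fin n → ℝ) (t : ℝ) : ℝ :=
  sInf {v : ℝ | ∃ q : ℕ, 1 ≤ q ∧ (q : ℝ) ≤ t ∧ v = ⨆ j, nint ((q : ℝ) * α j)}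

lemma nint_bddBelow (x : ℝ) : BddBelow (Set.range fun a : ℤ => |x - (a : ℝ)|) := by
  refine ⟨0, ?_⟩
  rintro v ⟨a, rfl⟩
  exact abs_nonneg _

lemma nint_nonneg (x : ℝ) : 0 ≤ nint x :=
  le_ciInf fun a => abs_nonneg _

lemma nint_le (x : ℝ) (a : ℤ) : nint x ≤ |x - a| :=
  ciInf_le (nint_bddBelow x) a

lemma nint_le_abs (x : ℝ) : nint x ≤ |x| := by
  simpa using nint_le x 0

lemma nint_add_int (x : ℝ) (a : ℤ) : nint (x + a) = nint x := by
  refine le_antisymm (le_ciInf fun b => ?_) (le_ciInf fun b => ?_)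
  · calc nint (x + a) ≤ |x + a - ((b + a : ℤ) : ℝ)| := nint_le _ _
      _ = |x - b| := by push_cast; ring_nf
  · calc nint x ≤ |x - ((b - a : ℤ) : ℝ)| := nint_le _ _
      _ = |x + a - b| := by push_cast; ring_nf

lemma nint_neg (x : ℝ) : nint (-x) = nint x := by
  refine le_antisymm (le_ciInf fun b => ?_) (le_ciInf fun b => ?_)
  · calc nint (-x) ≤ |-x - ((-b : ℤ) : ℝ)| := nint_le _ _
      _ = |x - b| := by push_cast; rw [← abs_neg]; ring_nf
  · calc nint x ≤ |x - ((-b : ℤ) : ℝ)| := nint_le _ _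
      _ = |-x - b| := by push_cast; rw [← abs_neg]; ring_nf

lemma nint_sub_comm (x y : ℝ) : nint (x - y) = nint (y - x) := by
  rw [← nint_neg (x - y), neg_sub]

lemma nint_nat_mul (c : ℕ) (hc : 0 < c) (x : ℝ) : nint ((c : ℝ) * x) ≤ c * nint x := by
  have hc' : (0 : ℝ) < c := by exact_mod_cast hc
  have h1 : ∀ a : ℤ, nint ((c : ℝ) * x) ≤ c * |x - a| := by
    intro a
    calc nint ((c : ℝ) * x) ≤ |(c : ℝ) * x - ((c * a : ℤ) : ℝ)| := nint_le _ _
      _ = c * |x - a| := by push_cast; rw [← mul_sub, abs_mul, abs_of_pos hc']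
  have h2 : nint ((c : ℝ) * x) / c ≤ nint x := by
    refine le_ciInf fun a => ?_
    rw [div_le_iff₀ hc']
    calc nint ((c : ℝ) * x) ≤ c * |x - a| := h1 a
      _ = |x - a| * c := by ring
  calc nint ((c : ℝ) * x) = (nint ((c : ℝ) * x) / c) * c := by field_simp
    _ ≤ nint x * c := by exact mul_le_mul_of_nonneg_right h2 hc'.le
    _ = c * nint x := by ring

lemma nint_eq_abs_sub_round (x : ℝ) : nint x = |x - round x| := by
  refine le_antisymm (nint_le x (round x)) (le_ciInf fun a => ?_)
  rcases eq_or_ne a (round x) with rfl | hne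
  · exact le_refl _
  · have h1 : (1 : ℝ) ≤ |(a : ℝ) - (round x : ℝ)| := by
      have : (1 : ℤ) ≤ |a - round x| := Int.one_le_abs (sub_ne_zero.mpr hne)
      exact_mod_cast this
    have h2 : |x - round x| ≤ 1 / 2 := abs_sub_round x
    have h3 : |(a : ℝ) - (round x : ℝ)| ≤ |(a : ℝ) - x| + |x - round x| := by
      calc |(a : ℝ) - (round x : ℝ)| = |((a : ℝ) - x) + (x - round x)| := by ring_nf
        _ ≤ _ := abs_add_le _ _
    have h4 : |x - a| = |(a : ℝ) - x| := abs_sub_comm _ _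
    linarith

lemma nint_le_abs_fract_sub (x y : ℝ) : nint (x - y) ≤ |Int.fract x - Int.fract y| := by
  have h : x - y = (Int.fract x - Int.fract y) + ((⌊x⌋ - ⌊y⌋ : ℤ) : ℝ) := by
    rw [Int.fract, Int.fract]; push_cast; ring
  rw [h, nint_add_int]
  exact nint_le_abs _

lemma iSup_nint_nonneg {n : ℕ} (f : Fin n → ℝ) : 0 ≤ ⨆ j, nint (f j) :=
  Real.iSup_nonneg fun j => nint_nonneg _

lemma psi_le {n : ℕ} (α : Fin n → ℝ) {t : ℝ} {q : ℕ} (hq1 : 1 ≤ q) (hqt : (q : ℝ) ≤ t) :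
    psiFun n α t ≤ ⨆ j, nint ((q : ℝ) * α j) := by
  refine csInf_le ⟨0, ?_⟩ ⟨q, hq1, hqt, rfl⟩
  rintro v ⟨q, _, _, rfl⟩
  exact iSup_nint_nonneg _

lemma psi_nonneg {n : ℕ} (α : Fin n → ℝ) (t : ℝ) : 0 ≤ psiFun n α t := by
  apply Real.sInf_nonneg
  rintro v ⟨q, _, _, rfl⟩
  exact iSup_nint_nonneg _

/-- Extraction from the limsup hypothesis: a positive `c` with arbitrarily large good scales. -/
lemma exists_good_scales (n : ℕ) (hn : 1 ≤ n) (α : Fin n → ℝ)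
    (hns : 0 < Filter.atTop.limsup (fun t : ℝ => t ^ ((1 : ℝ) / n) * psiFun n α t)) :
    ∃ c : ℝ, 0 < c ∧ ∀ T : ℝ, ∃ t : ℝ, T ≤ t ∧ 1 ≤ t ∧
      c < t ^ ((1 : ℝ) / n) * psiFun n α t := by
  set f : ℝ → ℝ := fun t => t ^ ((1 : ℝ) / n) * psiFun n α t with hf
  set c := Filter.atTop.limsup f with hc
  refine ⟨c / 2, by linarith, fun T => ?_⟩
  by_contra hcon
  push_neg at hcon
  have hev : ∀ᶠ t in (atTop : Filter ℝ), f t ≤ c / 2 := by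
    filter_upwards [Filter.eventually_ge_atTop (max T 1)] with t ht
    exact hcon t (le_trans (le_max_left _ _) ht) (le_trans (le_max_right _ _) ht)
  have hcb : Filter.IsCoboundedUnder (· ≤ ·) (atTop : Filter ℝ) f := by
    apply Filter.IsCoboundedUnder.of_frequently_ge (a := 0)
    apply Filter.Eventually.frequently
    filter_upwards [Filter.eventually_ge_atTop (0 : ℝ)] with t ht
    exact mul_nonneg (Real.rpow_nonneg ht _) (psi_nonneg α t)
  have : c ≤ c / 2 := Filter.limsup_le_of_le hcb hev
  linarith

lemma cell_close {N : ℕ} (hN : 0 < N) {x y : ℝ}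
    (h : ⌊Int.fract x * N⌋₊ = ⌊Int.fract y * N⌋₊) : |Int.fract x - Int.fract y| < 1 / N := by
  have hN' : (0 : ℝ) < N := by exact_mod_cast hN
  have hx0 : 0 ≤ Int.fract x * N := mul_nonneg (Int.fract_nonneg x) hN'.le
  have hy0 : 0 ≤ Int.fract y * N := mul_nonneg (Int.fract_nonneg y) hN'.le
  have h1 : (⌊Int.fract x * N⌋₊ : ℝ) ≤ Int.fract x * N := Nat.floor_le hx0
  have h2 : Int.fract x * N < ⌊Int.fract x * N⌋₊ + 1 := Nat.lt_floor_add_one _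
  have h3 : (⌊Int.fract y * N⌋₊ : ℝ) ≤ Int.fract y * N := Nat.floor_le hy0
  have h4 : Int.fract y * N < ⌊Int.fract y * N⌋₊ + 1 := Nat.lt_floor_add_one _
  rw [h] at h1 h2
  have h5 : |Int.fract x * N - Int.fract y * N| < 1 := by
    rw [abs_sub_lt_iff]; constructor <;> linarith
  have h6 : |Int.fract x - Int.fract y| * N < 1 := by
    calc |Int.fract x - Int.fract y| * N = |Int.fract x - Int.fract y| * |(N:ℝ)| := by
          rw [abs_of_pos hN']
      _ = |Int.fract x * N - Int.fract y * N| := by rw [← abs_mul]; ring_nf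
      _ < 1 := h5
  rw [lt_div_iff₀ hN']
  linarith

lemma key (n : ℕ) (hn : 1 ≤ n) (α : Fin n → ℝ) (γ : ℝ) (hγ0 : 0 < γ) (hγ1 : γ ≤ 1)
    (hfreq : ∀ T : ℝ, ∃ t : ℝ, T ≤ t ∧ 1 ≤ t ∧ γ < t ^ ((1 : ℝ) / n) * psiFun n α t) :
    ∃ δ : ℝ, 0 < δ ∧ ∀ Q₀ : ℕ, ∃ q : ℕ, Q₀ ≤ q ∧ 1 ≤ q ∧
      ∀ η : Fin n → ℝ, ∃ k : ℕ, 1 ≤ k ∧ k ≤ q ∧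
        ∀ i, nint ((k : ℝ) * α i - η i) < δ / (q : ℝ) ^ ((1 : ℝ) / n) := by
  haveI : Nonempty (Fin n) := Fin.pos_iff_nonempty.mp (by omega)
  have hn0 : (n : ℝ) ≠ 0 := by positivity
  have hnpos : (0 : ℝ) < n := by positivity
  set J₀ := ⌈(3 / γ) ^ n⌉₊ with hJdef
  have hJ1 : 1 ≤ J₀ := Nat.one_le_iff_ne_zero.mpr (by
    have : 0 < J₀ := Nat.ceil_pos.mpr (by positivity)
    omega)
  set L := J₀.factorial with hLdef
  have hL1 : 1 ≤ L := J₀.factorial_pos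
  have hL1R : (1 : ℝ) ≤ L := by exact_mod_cast hL1
  refine ⟨3 * (L : ℝ) ^ 2, by nlinarith [hL1R], fun Q₀ => ?_⟩
  obtain ⟨t, htT, ht1, hψt⟩ := hfreq (max Q₀ 1)
  set tpow := t ^ ((1 : ℝ) / n) with htpowdef
  have ht0 : (0 : ℝ) < t := by linarith
  have htpow0 : 0 < tpow := Real.rpow_pos_of_pos ht0 _
  have htpow1 : 1 ≤ tpow := by
    calc (1 : ℝ) = (1 : ℝ) ^ ((1 : ℝ) / n) := (Real.one_rpow _).symm
      _ ≤ tpow := Real.rpow_le_rpow (by norm_num) ht1 (by positivity)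
  have htpown : tpow ^ n = t := by
    rw [htpowdef, ← Real.rpow_natCast (t ^ ((1 : ℝ) / n)) n, ← Real.rpow_mul ht0.le]
    rw [one_div_mul_cancel hn0, Real.rpow_one]
  set ε := γ / tpow with hεdef
  have hε0 : 0 < ε := div_pos hγ0 htpow0
  have hε1 : ε ≤ 1 := by rw [hεdef, div_le_one htpow0]; linarith
  have hψε : ε < psiFun n α t := by
    rw [hεdef, div_lt_iff₀ htpow0]
    calc γ < tpow * psiFun n α t := hψt
      _ = psiFun n α t * tpow := by ring
  set Q := ⌊t⌋₊ with hQdef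
  have hQ1 : 1 ≤ Q := Nat.le_floor (by exact_mod_cast ht1)
  have hQt : (Q : ℝ) ≤ t := Nat.floor_le ht0.le
  have htQ1 : t < Q + 1 := Nat.lt_floor_add_one t
  have hQQ₀ : Q₀ ≤ Q := Nat.le_floor (le_trans (by exact_mod_cast le_max_left (Q₀:ℝ) 1) htT)
  set q := 2 * L * Q + 1 with hqdef
  have hqQ : Q ≤ q := by nlinarith
  have hq1 : 1 ≤ q := by omega
  refine ⟨q, le_trans hQQ₀ hqQ, hq1, fun η => ?_⟩
  have hsep : ∀ q' : ℕ, 1 ≤ q' → (q' : ℝ) ≤ t → ε < ⨆ i, nint ((q' : ℝ) * α i) :=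
    fun q' h1 h2 => lt_of_lt_of_le hψε (psi_le α h1 h2)
  set N := ⌈2 / ε⌉₊ with hNdef
  have hN0 : 0 < N := Nat.ceil_pos.mpr (by positivity)
  have hN0R : (0 : ℝ) < N := by exact_mod_cast hN0
  have hNε : 1 / (N : ℝ) ≤ ε / 2 := by
    have h := Nat.le_ceil (2 / ε)
    rw [div_le_div_iff₀ hN0R (by norm_num : (0:ℝ) < 2)]
    calc (1 : ℝ) * 2 = ε * (2 / ε) := by field_simp
      _ ≤ ε * N := by exact mul_le_mul_of_nonneg_left h hε0.le
  have hNup : (N : ℝ) ≤ 3 / ε := by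
    have h := Nat.ceil_lt_add_one (by positivity : (0:ℝ) ≤ 2 / ε)
    have h1 : (1 : ℝ) ≤ 1 / ε := by rw [le_div_iff₀ hε0]; linarith
    have h2 : 2 / ε + 1 / ε = 3 / ε := by ring
    linarith
  have hεn : ε ^ n = γ ^ n / t := by rw [hεdef, div_pow, htpown]
  have hcard : N ^ n < (Q + 1) * (J₀ + 1) := by
    have h1 : ((N : ℝ)) ^ n ≤ (3 / ε) ^ n := pow_le_pow_left₀ hN0R.le hNup n
    have h2 : (3 / ε) ^ n = (3 / γ) ^ n * t := by
      have h35 : 3 / ε = (3 / γ) * tpow := by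
        rw [hεdef]; field_simp
      rw [h35, mul_pow, htpown]
    have h3 : (3 / γ) ^ n ≤ (J₀ : ℝ) + 1 := le_trans (Nat.le_ceil _) (by linarith)
    have h4 : ((N : ℝ)) ^ n < ((Q : ℝ) + 1) * ((J₀ : ℝ) + 1) := by
      calc ((N : ℝ)) ^ n ≤ (3 / γ) ^ n * t := by rw [← h2]; exact h1
        _ < (3 / γ) ^ n * ((Q : ℝ) + 1) := by
            exact mul_lt_mul_of_pos_left htQ1 (pow_pos (div_pos (by norm_num) hγ0) n)
        _ ≤ ((J₀ : ℝ) + 1) * ((Q : ℝ) + 1) := by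
            exact mul_le_mul_of_nonneg_right h3 (by positivity)
        _ = ((Q : ℝ) + 1) * ((J₀ : ℝ) + 1) := by ring
    exact_mod_cast h4
  set M := L * Q + 1 with hMdef
  set eta : Fin n → ℝ := fun i => (η i - (M : ℝ) * α i) / L with hetadef
  set w : Fin (Q + 1) × Fin (J₀ + 1) → Fin n → ℝ :=
    fun p i => (p.1.val : ℝ) * α i + (p.2.val : ℝ) * eta i with hwdef
  clear_value J₀ L tpow ε Q q N M eta w
  have hcell : ∃ p p' : Fin (Q + 1) × Fin (J₀ + 1), p ≠ p' ∧
      ∀ i, ⌊Int.fract (w p i) * N⌋₊ = ⌊Int.fract (w p' i) * N⌋₊ := by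
    set cell : Fin (Q + 1) × Fin (J₀ + 1) → (Fin n → Fin N) := fun p i =>
      ⟨⌊Int.fract (w p i) * N⌋₊, by
        rw [Nat.floor_lt (mul_nonneg (Int.fract_nonneg _) hN0R.le)]
        calc Int.fract (w p i) * N < 1 * N := by
              exact mul_lt_mul_of_pos_right (Int.fract_lt_one _) hN0R
          _ = N := one_mul _⟩ with hcelldef
    obtain ⟨p, p', hne, heq⟩ := Fintype.exists_ne_map_eq_of_card_lt cell (by
      simp only [Fintype.card_fun, Fintype.card_prod, Fintype.card_fin]
      exact hcard)
    exact ⟨p, p', hne, fun i => by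
      have := congrFun heq i
      simpa [hcelldef, Fin.ext_iff] using this⟩
  obtain ⟨p, p', hpp, hcc⟩ := hcell
  have hclose : ∀ i, nint (w p i - w p' i) < ε / 2 := by
    intro i
    calc nint (w p i - w p' i) ≤ |Int.fract (w p i) - Int.fract (w p' i)| :=
          nint_le_abs_fract_sub _ _
      _ < 1 / N := cell_close hN0 (hcc i)
      _ ≤ ε / 2 := hNε
  have contra : ∀ a b : Fin (Q + 1) × Fin (J₀ + 1), a.2 = b.2 → b.1.val < a.1.val →
      (∀ i, nint (w a i - w b i) < ε / 2) → False := by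
    intro a b h2 hlt hcl
    set q' := a.1.val - b.1.val with hq'def
    have hq'1 : 1 ≤ q' := by omega
    have hq'Q : q' ≤ Q := by have := a.1.isLt; omega
    have hdiff : ∀ i, w a i - w b i = (q' : ℝ) * α i := by
      intro i
      simp only [hwdef, h2, hq'def]
      push_cast [Nat.cast_sub hlt.le]
      ring
    have hsup : ε < ⨆ i, nint ((q' : ℝ) * α i) := by
      refine hsep q' hq'1 ?_
      have : (q' : ℝ) ≤ (Q : ℝ) := by exact_mod_cast hq'Q
      linarith
    have hsup2 : (⨆ i, nint ((q' : ℝ) * α i)) ≤ ε / 2 := by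
      refine ciSup_le fun i => ?_
      rw [← hdiff i]
      exact (hcl i).le
    linarith
  have main : ∀ a b : Fin (Q + 1) × Fin (J₀ + 1), b.2.val < a.2.val →
      (∀ i, nint (w a i - w b i) < ε / 2) →
      ∃ k : ℕ, 1 ≤ k ∧ k ≤ q ∧
        ∀ i, nint ((k : ℝ) * α i - η i) < 3 * (L : ℝ) ^ 2 / (q : ℝ) ^ ((1 : ℝ) / n) := by
    intro a b hlt hcl
    set d := a.2.val - b.2.val with hddef
    have hd1 : 1 ≤ d := by omega
    have hdJ : d ≤ J₀ := by have := a.2.isLt; omega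
    have hdvd : d ∣ L := by rw [hLdef]; exact Nat.dvd_factorial (by omega) hdJ
    set e := L / d with hedef
    have hed : e * d = L := Nat.div_mul_cancel hdvd
    have hdL : d ≤ L := Nat.le_of_dvd (by omega) hdvd
    have he1 : 1 ≤ e := Nat.div_pos hdL (by omega)
    have heL : e ≤ L := Nat.div_le_self _ _
    set mZ : ℤ := (a.1.val : ℤ) - (b.1.val : ℤ) with hmdef
    have hmup : mZ ≤ (Q : ℤ) := by have := a.1.isLt; omega
    have hmlo : -(Q : ℤ) ≤ mZ := by have := b.1.isLt; omega
    obtain ⟨kZ, hkZdef⟩ : ∃ kZ : ℤ, kZ = (M : ℤ) - (e : ℤ) * mZ := ⟨_, rfl⟩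
    have heQbound : e * mZ ≤ (L : ℤ) * Q ∧ -((L : ℤ) * Q) ≤ e * mZ := by
      have he0 : (0 : ℤ) ≤ (e : ℤ) := by exact_mod_cast Nat.zero_le e
      have heL' : (e : ℤ) ≤ (L : ℤ) := by exact_mod_cast heL
      have hQ0 : (0 : ℤ) ≤ (Q : ℤ) := by positivity
      rcases le_or_gt 0 mZ with hm | hm
      · constructor
        · calc (e : ℤ) * mZ ≤ (L : ℤ) * mZ := mul_le_mul_of_nonneg_right heL' hm
            _ ≤ (L : ℤ) * Q := mul_le_mul_of_nonneg_left hmup (by positivity)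
        · have ha : (0 : ℤ) ≤ (e : ℤ) * mZ := mul_nonneg he0 hm
          have hb : (0 : ℤ) ≤ (L : ℤ) * Q := by positivity
          linarith
      · constructor
        · have h1 : (e : ℤ) * mZ ≤ 0 := mul_nonpos_of_nonneg_of_nonpos he0 hm.le
          have hb : (0 : ℤ) ≤ (L : ℤ) * Q := by positivity
          linarith
        · calc -((L : ℤ) * Q) = (L : ℤ) * (-(Q:ℤ)) := by ring
            _ ≤ (e : ℤ) * (-(Q:ℤ)) := by
                apply mul_le_mul_of_nonpos_right heL'
                linarith
            _ ≤ (e : ℤ) * mZ := mul_le_mul_of_nonneg_left hmlo he0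
    have hMZ : (M : ℤ) = (L : ℤ) * Q + 1 := by rw [hMdef]; push_cast; ring
    have hkZ1 : 1 ≤ kZ := by
      rw [hkZdef, hMZ]; have := heQbound.1; linarith
    have hkZq : kZ ≤ (q : ℤ) := by
      have hqZ : (q : ℤ) = 2 * (L : ℤ) * Q + 1 := by rw [hqdef]; push_cast; ring
      rw [hkZdef, hMZ, hqZ]
      have := heQbound.2
      linarith
    obtain ⟨k, hkdef⟩ : ∃ k : ℕ, k = kZ.toNat := ⟨_, rfl⟩
    have hkZ0 : (0 : ℤ) ≤ kZ := by linarith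
    have hkcastZ : ((k : ℕ) : ℤ) = kZ := by rw [hkdef]; exact Int.toNat_of_nonneg hkZ0
    have hk1 : 1 ≤ k := by
      have : (1 : ℤ) ≤ ((k : ℕ) : ℤ) := by rw [hkcastZ]; exact hkZ1
      exact_mod_cast this
    have hkq : k ≤ q := by
      have : ((k : ℕ) : ℤ) ≤ (q : ℤ) := by rw [hkcastZ]; exact hkZq
      exact_mod_cast this
    have hkcast : ((k : ℕ) : ℝ) = ((kZ : ℤ) : ℝ) := by exact_mod_cast hkcastZ
    have hper : ∀ i, nint ((k : ℝ) * α i - η i) ≤ (L : ℝ) * (ε / 2) := by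
      intro i
      have hdiff : w a i - w b i = (d : ℝ) * eta i + (mZ : ℝ) * α i := by
        simp only [hwdef, hmdef, hddef]
        push_cast [Nat.cast_sub hlt.le]
        ring
      have hedR : (e : ℝ) * d = L := by exact_mod_cast hed
      have hL0 : (L : ℝ) ≠ 0 := Nat.cast_ne_zero.mpr (by omega)
      have hkZR : ((kZ : ℤ) : ℝ) = (M : ℝ) - (e : ℝ) * (mZ : ℝ) := by
        rw [hkZdef]; push_cast; ring
      have h2 : (e : ℝ) * ((d : ℝ) * eta i + (mZ : ℝ) * α i)
          = η i - (kZ : ℝ) * α i := by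
        rw [hetadef, hkZR]
        calc (e : ℝ) * ((d : ℝ) * ((η i - (M : ℝ) * α i) / L) + (mZ : ℝ) * α i)
            = ((e : ℝ) * (d : ℝ)) * ((η i - (M : ℝ) * α i) / L)
              + (e : ℝ) * (mZ : ℝ) * α i := by ring
          _ = (L : ℝ) * ((η i - (M : ℝ) * α i) / L) + (e : ℝ) * (mZ : ℝ) * α i := by
              rw [hedR]
          _ = (η i - (M : ℝ) * α i) + (e : ℝ) * (mZ : ℝ) * α i := by
              rw [mul_div_cancel₀ _ hL0]
          _ = η i - ((M : ℝ) - (e : ℝ) * (mZ : ℝ)) * α i := by ring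
      have h3 : nint ((k : ℝ) * α i - η i) = nint ((e : ℝ) * (w a i - w b i)) := by
        rw [hdiff, h2, nint_sub_comm, hkcast]
      rw [h3]
      calc nint ((e : ℝ) * (w a i - w b i)) ≤ (e : ℕ) * nint (w a i - w b i) :=
            nint_nat_mul e (by omega) _
        _ ≤ (e : ℝ) * (ε / 2) := by
            exact mul_le_mul_of_nonneg_left (hcl i).le (by positivity)
        _ ≤ (L : ℝ) * (ε / 2) := by
            exact mul_le_mul_of_nonneg_right (by exact_mod_cast heL) (by linarith)
    refine ⟨k, hk1, hkq, fun i => ?_⟩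
    have hq3 : (q : ℝ) ≤ 3 * L * t := by
      have hqR : (q : ℝ) = 2 * (L : ℝ) * Q + 1 := by rw [hqdef]; push_cast; ring
      rw [hqR]
      have ha : 2 * (L : ℝ) * Q ≤ 2 * (L : ℝ) * t :=
        mul_le_mul_of_nonneg_left hQt (by positivity)
      have hb : (1 : ℝ) ≤ (L : ℝ) * t := by nlinarith [hL1R, ht1]
      linarith
    have hq0R : (0 : ℝ) < q := by exact_mod_cast hq1
    have hqpow0 : 0 < (q : ℝ) ^ ((1 : ℝ) / n) := Real.rpow_pos_of_pos hq0R _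
    have hqpow : (q : ℝ) ^ ((1 : ℝ) / n) ≤ 3 * L * tpow := by
      calc (q : ℝ) ^ ((1 : ℝ) / n) ≤ (3 * L * t) ^ ((1 : ℝ) / n) :=
            Real.rpow_le_rpow hq0R.le hq3 (by positivity)
        _ = (3 * (L : ℝ)) ^ ((1 : ℝ) / n) * tpow := by
            rw [Real.mul_rpow (by positivity) ht0.le, htpowdef]
        _ ≤ 3 * L * tpow := by
            refine mul_le_mul_of_nonneg_right ?_ htpow0.le
            calc (3 * (L : ℝ)) ^ ((1 : ℝ) / n) ≤ (3 * (L : ℝ)) ^ (1 : ℝ) :=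
                  Real.rpow_le_rpow_of_exponent_le (by linarith) (by
                    rw [div_le_one hnpos]
                    exact_mod_cast hn)
              _ = 3 * L := Real.rpow_one _
    have hfin : (L : ℝ) * (ε / 2) < 3 * (L : ℝ) ^ 2 / (q : ℝ) ^ ((1 : ℝ) / n) := by
      have h7 : 3 * (L : ℝ) ^ 2 / (3 * L * tpow) ≤ 3 * (L : ℝ) ^ 2 / (q : ℝ) ^ ((1 : ℝ) / n) :=
        div_le_div_of_nonneg_left (by positivity) hqpow0 hqpow
      have hL0' : (L : ℝ) ≠ 0 := Nat.cast_ne_zero.mpr (by omega)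
      have h8 : 3 * (L : ℝ) ^ 2 / (3 * L * tpow) = L / tpow := by
        rw [div_eq_div_iff (ne_of_gt (by nlinarith [hL1R, htpow0] : (0:ℝ) < 3 * (L:ℝ) * tpow)) htpow0.ne']
        ring
      have h9 : (L : ℝ) * (ε / 2) = L * γ / (2 * tpow) := by
        rw [hεdef]; field_simp
      have h10 : (L : ℝ) * γ / (2 * tpow) < L / tpow := by
        have hLtp : (0 : ℝ) < (L : ℝ) * tpow := mul_pos (by linarith) htpow0
        rw [div_lt_div_iff₀ (by linarith) htpow0]
        nlinarith [hLtp, hγ1, htpow0]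
      linarith
    exact lt_of_le_of_lt (hper i) hfin
  by_cases h2 : p.2 = p'.2
  · exfalso
    rcases Nat.lt_or_ge p.1.val p'.1.val with h | h
    · exact contra p' p h2.symm h (fun i => by rw [nint_sub_comm]; exact hclose i)
    · have hne1 : p.1 ≠ p'.1 := fun hh => hpp (Prod.ext hh h2)
      have hlt : p'.1.val < p.1.val := by
        rcases Nat.lt_or_ge p'.1.val p.1.val with h' | h'
        · exact h'
        · exact absurd (Fin.ext (le_antisymm h' h)) hne1
      exact contra p p' h2 hlt hclose
  · rcases Nat.lt_or_ge p.2.val p'.2.val with h | h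
    · exact main p' p h (fun i => by rw [nint_sub_comm]; exact hclose i)
    · have hlt : p'.2.val < p.2.val := by
        rcases Nat.lt_or_ge p'.2.val p.2.val with h' | h'
        · exact h'
        · exact absurd (Fin.ext (le_antisymm h' h)) h2
      exact main p p' hlt hclose


/-- **Khintchine's criterion (direct direction).** If `α ∈ ℝ^n` is non-singular,
i.e. `limsup_{t→∞} t^(1/n) ψ_α(t) > 0`, then there exist `δ > 0` and infinitely many
positive integers `q` such that for every `η ∈ ℝ^n` there is a positive integer `k ≤ q`
with `max_j ‖kα_j - η_j‖ ≤ δ / q^(1/n)`; in particular the Kronecker sequence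
`k ↦ ({kα_1},…,{kα_n})` is well distributed with constant `C = 2δ`. -/
theorem nonsingular_implies_well_distributed
    (n : ℕ) (hn : 1 ≤ n) (α : Fin n → ℝ)
    (hns : 0 < Filter.atTop.limsup (fun t : ℝ => t ^ ((1 : ℝ) / n) * psiFun n α t)) :
    ∃ δ : ℝ, 0 < δ ∧
      (∀ Q : ℕ, ∃ q : ℕ, Q ≤ q ∧ 1 ≤ q ∧
        ∀ η : Fin n → ℝ, ∃ k : ℕ, 1 ≤ k ∧ k ≤ q ∧
          (⨆ j, nint ((k : ℝ) * α j - η j)) ≤ δ / (q : ℝ) ^ ((1 : ℝ) / n)) ∧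
      (∀ Q : ℕ, ∃ q : ℕ, Q ≤ q ∧ 1 ≤ q ∧
        ∀ η : Fin n → ℝ, (∀ j, η j ∈ Set.Ico (0 : ℝ) 1) →
          (Set.univ.pi fun j =>
              Set.Ico (η j) (η j + 2 * δ / (q : ℝ) ^ ((1 : ℝ) / n))) ⊆
            (Set.univ.pi fun _ : Fin n => Set.Ico (0 : ℝ) 1) →
          ∃ k : ℕ, 1 ≤ k ∧ k ≤ q ∧
            ∀ j, Int.fract ((k : ℝ) * α j) ∈
              Set.Ico (η j) (η j + 2 * δ / (q : ℝ) ^ ((1 : ℝ) / n))) := by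
  haveI : Nonempty (Fin n) := Fin.pos_iff_nonempty.mp (by omega)
  obtain ⟨c, hc0, hfreq0⟩ := exists_good_scales n hn α hns
  have hγ0 : 0 < min c 1 := lt_min hc0 one_pos
  have hγ1 : min c 1 ≤ 1 := min_le_right _ _
  have hfreq : ∀ T : ℝ, ∃ t : ℝ, T ≤ t ∧ 1 ≤ t ∧
      min c 1 < t ^ ((1 : ℝ) / n) * psiFun n α t := by
    intro T
    obtain ⟨t, h1, h2, h3⟩ := hfreq0 T
    exact ⟨t, h1, h2, lt_of_le_of_lt (min_le_left _ _) h3⟩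
  obtain ⟨δ, hδ0, hkey⟩ := key n hn α (min c 1) hγ0 hγ1 hfreq
  refine ⟨δ, hδ0, ?_, ?_⟩
  · intro Q
    obtain ⟨q, hq1, hq2, hq3⟩ := hkey Q
    refine ⟨q, hq1, hq2, fun η => ?_⟩
    obtain ⟨k, hk1, hk2, hk3⟩ := hq3 η
    exact ⟨k, hk1, hk2, ciSup_le fun i => (hk3 i).le⟩
  · intro Q
    obtain ⟨q, hq1, hq2, hq3⟩ := hkey Q
    refine ⟨q, hq1, hq2, fun η hη hsub => ?_⟩
    have hq0R : (0 : ℝ) < q := by exact_mod_cast hq2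
    set ρ := δ / (q : ℝ) ^ ((1 : ℝ) / n) with hρdef
    have hρ0 : 0 < ρ := div_pos hδ0 (Real.rpow_pos_of_pos hq0R _)
    have hw : 2 * δ / (q : ℝ) ^ ((1 : ℝ) / n) = 2 * ρ := by rw [hρdef]; ring
    have hup : ∀ j, η j + 2 * ρ ≤ 1 := by
      intro j
      by_contra hcon
      push_neg at hcon
      have hmem : (Function.update η j 1) ∈ Set.univ.pi
          (fun j => Set.Ico (η j) (η j + 2 * δ / (q : ℝ) ^ ((1 : ℝ) / n))) := by
        intro j' _
        rcases eq_or_ne j' j with rfl | hne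
        · simp only [Function.update_self, Set.mem_Ico]
          rw [hw]
          exact ⟨(hη j').2.le, by linarith⟩
        · simp only [Function.update_of_ne hne, Set.mem_Ico]
          rw [hw]
          exact ⟨le_refl _, by linarith⟩
      have h1 := hsub hmem j (Set.mem_univ j)
      simp only [Function.update_self, Set.mem_Ico] at h1
      linarith [h1.2]
    obtain ⟨k, hk1, hk2, hk3⟩ := hq3 (fun j => η j + ρ)
    refine ⟨k, hk1, hk2, fun j => ?_⟩
    have h1 : nint ((k : ℝ) * α j - (η j + ρ)) < ρ := hk3 j
    rw [nint_eq_abs_sub_round] at h1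
    obtain ⟨r, hrdef⟩ : ∃ r : ℤ, r = round ((k : ℝ) * α j - (η j + ρ)) := ⟨_, rfl⟩
    rw [← hrdef] at h1
    have h1' := abs_lt.mp h1
    have h2a : η j < (k : ℝ) * α j - r := by linarith [h1'.1]
    have h2b : (k : ℝ) * α j - r < η j + 2 * ρ := by linarith [h1'.2]
    have h3 : Int.fract ((k : ℝ) * α j) = (k : ℝ) * α j - r := by
      have h0 : (0 : ℝ) ≤ (k : ℝ) * α j - r := le_of_lt (lt_of_le_of_lt (hη j).1 h2a)
      have hlt1 : (k : ℝ) * α j - r < 1 := lt_of_lt_of_le h2b (hup j)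
      calc Int.fract ((k : ℝ) * α j) = Int.fract ((k : ℝ) * α j - r) :=
            (Int.fract_sub_intCast _ r).symm
        _ = (k : ℝ) * α j - r := Int.fract_eq_self.mpr ⟨h0, hlt1⟩
    rw [h3, Set.mem_Ico, hw]
    exact ⟨h2a.le, h2b⟩
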